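/- Suppose V : (0,∞) → ℝ is twice differentiable, V(S) > 0 for all S > 0, V solves the perpetual American put variational inequality, and V(S) → E as S → 0⁺. Then there exists an optimal exercise boundary: a number S₀ ∈ [0, E] such that V(S) = max(E−S, 0) for all 0 < S < S₀ and V(S) > max(E−S, 0) for all S > S₀. -/

import Mathlib

/-- The Black–Scholes ordinary differential operator `(−LV)(S)`,
expressed via explicitly given first and second derivative functions. -/
noncomputable def negL (r q σ : ℝ) (V V' V'' : ℝ → ℝ) (S : ℝ) : ℝ :=
  -(σ ^ 2 / 2) * S ^ 2 * V'' S - (r - q) * S * V' S + r * V S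


open Set Filter

/-- At an interior local max with second derivative, the second derivative is nonpositive. -/
lemma second_deriv_nonpos_of_isLocalMax {f g : ℝ → ℝ} {f'' m : ℝ}
    (hm : 0 < m)
    (hf : ∀ x : ℝ, 0 < x → HasDerivAt f (g x) x)
    (hg : HasDerivAt g f'' m)
    (hmax : IsLocalMax f m) : f'' ≤ 0 := by
  by_contra hpos
  push_neg at hpos
  have hg0 : g m = 0 := hmax.hasDerivAt_eq_zero (hf m hm)
  -- slope of g tends to f'' > 0 from the right
  have hslope : Tendsto (slope g m) (nhdsWithin m (Set.Ioi m)) (nhds f'') :=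
    (hasDerivAt_iff_tendsto_slope.1 hg).mono_left
      (nhdsWithin_mono m (fun x hx => ne_of_gt hx))
  have h1 : ∀ᶠ x in nhdsWithin m (Set.Ioi m), 0 < slope g m x :=
    hslope.eventually_const_lt hpos
  have h2 : ∀ᶠ x in nhdsWithin m (Set.Ioi m), f x ≤ f m :=
    hmax.filter_mono nhdsWithin_le_nhds
  obtain ⟨u, hu, hsub⟩ := mem_nhdsGT_iff_exists_Ioo_subset.1 (h1.and h2)
  have hmu : m < u := hu
  set y : ℝ := (m + u) / 2 with hy
  have hmy : m < y := by simp only [hy]; linarith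
  have hyu : y < u := by simp only [hy]; linarith
  -- g > 0 on Ioo m y (subset of Ioo m u)
  have hgpos : ∀ x ∈ Set.Ioo m y, 0 < g x := by
    intro x hx
    have hxu : x ∈ Set.Ioo m u := ⟨hx.1, lt_trans hx.2 hyu⟩
    have := (hsub hxu).1
    have hxm : 0 < x - m := by linarith [hx.1]
    have : 0 < (g x - g m) / (x - m) := by
      simpa [slope_def_field, div_eq_iff, hg0] using this
    rw [hg0, sub_zero] at this
    rcases div_pos_iff.1 this with h | h
    · exact h.1
    · linarith [h.2]
  have hmono : StrictMonoOn f (Set.Icc m y) := by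
    apply strictMonoOn_of_hasDerivWithinAt_pos (convex_Icc m y)
    · intro x hx
      exact ((hf x (lt_of_lt_of_le hm hx.1)).continuousAt).continuousWithinAt
    · intro x hx
      rw [interior_Icc] at hx
      exact ((hf x (lt_trans hm hx.1)).hasDerivWithinAt)
    · intro x hx
      rw [interior_Icc] at hx
      exact hgpos x hx
  have : f m < f y := hmono (Set.left_mem_Icc.2 (le_of_lt hmy))
    (Set.right_mem_Icc.2 (le_of_lt hmy)) hmy
  have : f y ≤ f m := (hsub ⟨hmy, hyu⟩).2
  linarith

lemma second_deriv_nonneg_of_isLocalMin {f g : ℝ → ℝ} {f'' m : ℝ}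
    (hm : 0 < m)
    (hf : ∀ x : ℝ, 0 < x → HasDerivAt f (g x) x)
    (hg : HasDerivAt g f'' m)
    (hmin : IsLocalMin f m) : 0 ≤ f'' := by
  have := second_deriv_nonpos_of_isLocalMax (f := fun x => -f x) (g := fun x => -g x)
    (f'' := -f'') hm (fun x hx => (hf x hx).neg) hg.neg hmin.neg
  linarith

/-- If `V` touches the payoff at `c ∈ (0,E)`, it equals the payoff on all of `(0,c)`. -/
lemma key_contact (r q σ E : ℝ) (hr : 0 < r) (hq : 0 ≤ q) (hσ : 0 < σ)
    (V V' V'' : ℝ → ℝ)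
    (hV' : ∀ S : ℝ, 0 < S → HasDerivAt V (V' S) S)
    (hV'' : ∀ S : ℝ, 0 < S → HasDerivAt V' (V'' S) S)
    (hVI : ∀ S : ℝ, 0 < S →
      min (negL r q σ V V' V'' S) (V S - max (E - S) 0) = 0)
    (hlim : Filter.Tendsto V (nhdsWithin 0 (Set.Ioi 0)) (nhds E))
    (c : ℝ) (hc0 : 0 < c) (hcE : c < E) (hcV : V c = E - c)
    (b : ℝ) (hb0 : 0 < b) (hbc : b < c) : V b = E - b := by
  set W : ℝ → ℝ := fun S => V S - (E - S) with hWdef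
  set W' : ℝ → ℝ := fun S => V' S + 1 with hW'def
  have hW' : ∀ S : ℝ, 0 < S → HasDerivAt W (W' S) S := by
    intro S hS
    have : HasDerivAt (fun x : ℝ => E - x) (-1) S := (hasDerivAt_id S).const_sub E
    have h := (hV' S hS).sub this
    simp only [sub_neg_eq_add] at h
    exact h
  have hW'' : ∀ S : ℝ, 0 < S → HasDerivAt W' (V'' S) S :=
    fun S hS => (hV'' S hS).add_const 1
  -- basic consequences of the VI
  have hVge : ∀ S : ℝ, 0 < S → 0 ≤ V S - max (E - S) 0 := by
    intro S hS
    have := hVI S hS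
    have h := min_le_right (negL r q σ V V' V'' S) (V S - max (E - S) 0)
    rw [this] at h; exact h
  have hnegLge : ∀ S : ℝ, 0 < S → 0 ≤ negL r q σ V V' V'' S := by
    intro S hS
    have := hVI S hS
    have h := min_le_left (negL r q σ V V' V'' S) (V S - max (E - S) 0)
    rw [this] at h; exact h
  have hWnonneg : ∀ S : ℝ, 0 < S → S < E → 0 ≤ W S := by
    intro S hS hSE
    have := hVge S hS
    have hmax : max (E - S) 0 = E - S := max_eq_left (by linarith)
    rw [hmax] at this; exact this
  -- analysis at the contact point c
  have hWc : W c = 0 := by simp [hWdef, hcV]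
  have hcmin : IsLocalMin W c := by
    filter_upwards [isOpen_Ioo.mem_nhds (show c ∈ Set.Ioo 0 E from ⟨hc0, hcE⟩)] with x hx
    rw [hWc]; exact hWnonneg x hx.1 hx.2
  have hW'c : W' c = 0 := hcmin.hasDerivAt_eq_zero (hW' c hc0)
  have hV'c : V' c = -1 := by
    have : V' c + 1 = 0 := hW'c
    linarith
  have hW''c : 0 ≤ V'' c :=
    second_deriv_nonneg_of_isLocalMin hc0 hW' (hW'' c hc0) hcmin
  have hqc : q * c ≤ r * E := by
    have h := hnegLge c hc0
    rw [negL, hV'c, hcV] at h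
    nlinarith [sq_nonneg σ, sq_nonneg c, mul_nonneg (mul_nonneg (le_of_lt (by positivity : (0:ℝ) < σ ^ 2 / 2)) (sq_nonneg c)) hW''c]
  -- suppose V b ≠ E - b; then W b > 0
  by_contra hne
  have hWb : 0 < W b := by
    have h0 := hWnonneg b hb0 (lt_trans hbc hcE)
    rcases lt_or_eq_of_le h0 with h | h
    · exact h
    · exact absurd (by simp [hWdef] at h; linarith [h] : V b = E - b) hne
  -- W → 0 at 0+
  have hlimW : Tendsto W (nhdsWithin 0 (Set.Ioi 0)) (nhds 0) := by
    have h2 : Tendsto (fun S : ℝ => E - S) (nhdsWithin 0 (Set.Ioi 0)) (nhds E) := by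
      have : Tendsto (fun S : ℝ => E - S) (nhds 0) (nhds (E - 0)) :=
        ((continuous_const.sub continuous_id).tendsto 0)
      simpa using this.mono_left nhdsWithin_le_nhds
    simpa using hlim.sub h2
  obtain ⟨u, hu, hsub⟩ := mem_nhdsGT_iff_exists_Ioo_subset.1
    (hlimW.eventually_lt_const hWb)
  have hu0 : (0:ℝ) < u := hu
  set ε : ℝ := min u b / 2 with hεdef
  have hε0 : 0 < ε := by positivity
  have hεu : ε < u := by
    have : min u b ≤ u := min_le_left _ _
    simp only [hεdef]; linarith
  have hεb : ε < b := by
    have : min u b ≤ b := min_le_right _ _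
    simp only [hεdef]; linarith
  -- maximum of W on [ε, c]
  have hεc : ε ≤ c := le_of_lt (lt_trans hεb hbc)
  have hcont : ContinuousOn W (Set.Icc ε c) := fun x hx =>
    ((hW' x (lt_of_lt_of_le hε0 hx.1)).continuousAt).continuousWithinAt
  obtain ⟨m, hmIcc, hmax⟩ := (isCompact_Icc).exists_isMaxOn
    (Set.nonempty_Icc.2 hεc) hcont
  have hm0 : 0 < m := lt_of_lt_of_le hε0 hmIcc.1
  have hWbm : W b ≤ W m := hmax ⟨le_of_lt hεb, le_of_lt hbc⟩
  have hWm : 0 < W m := lt_of_lt_of_le hWb hWbm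
  have hmc : m < c := by
    rcases lt_or_eq_of_le hmIcc.2 with h | h
    · exact h
    · rw [h] at hWm; rw [hWc] at hWm; linarith
  have hmE : m < E := lt_trans hmc hcE
  -- m is a local max of W
  have hlocmax : IsLocalMax W m := by
    filter_upwards [isOpen_Ioo.mem_nhds (show m ∈ Set.Ioo 0 c from ⟨hm0, hmc⟩)] with x hx
    by_cases hxε : x < ε
    · have : W x < W b := hsub ⟨hx.1, lt_trans hxε hεu⟩
      linarith
    · exact hmax ⟨le_of_not_gt hxε, le_of_lt hx.2⟩
  have hW'm : W' m = 0 := hlocmax.hasDerivAt_eq_zero (hW' m hm0)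
  have hV'm : V' m = -1 := by
    have : V' m + 1 = 0 := hW'm
    linarith
  have hW''m : V'' m ≤ 0 :=
    second_deriv_nonpos_of_isLocalMax hm0 hW' (hW'' m hm0) hlocmax
  -- at m, V > payoff, so negL = 0
  have hVm : V m = W m + (E - m) := by simp [hWdef]
  have hmaxm : max (E - m) 0 = E - m := max_eq_left (by linarith)
  have hnegLm : negL r q σ V V' V'' m = 0 := by
    have hmin := hVI m hm0
    rcases min_eq_iff.1 hmin with h | h
    · exact h.1
    · exfalso
      have : V m - max (E - m) 0 = 0 := h.1
      rw [hmaxm] at this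
      have : W m = 0 := by simp [hWdef]; linarith
      linarith
  rw [negL, hV'm, hVm] at hnegLm
  have hqm : q * m ≤ r * E := by nlinarith [mul_le_mul_of_nonneg_left (le_of_lt hmc) hq]
  nlinarith [mul_nonneg (mul_nonneg (le_of_lt (by positivity : (0:ℝ) < σ ^ 2 / 2)) (sq_nonneg m)) (neg_nonneg.2 hW''m), mul_pos hr hWm]

/-- Existence of the optimal exercise boundary: for a positive solution `V` of the
perpetual American put variational inequality with `V(S) → E` as `S → 0⁺`, there exists
`S₀ ∈ [0, E]` such that `V(S) = (E−S)⁺` for `0 < S < S₀` and `V(S) > (E−S)⁺` for `S > S₀`. -/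
theorem exists_optimal_exercise_boundary
    (r q σ E : ℝ) (hr : 0 < r) (hq : 0 ≤ q) (hσ : 0 < σ) (hE : 0 < E)
    (V V' V'' : ℝ → ℝ)
    (hV' : ∀ S : ℝ, 0 < S → HasDerivAt V (V' S) S)
    (hV'' : ∀ S : ℝ, 0 < S → HasDerivAt V' (V'' S) S)
    (hpos : ∀ S : ℝ, 0 < S → 0 < V S)
    (hVI : ∀ S : ℝ, 0 < S →
      min (negL r q σ V V' V'' S) (V S - max (E - S) 0) = 0)
    (hlim : Filter.Tendsto V (nhdsWithin 0 (Set.Ioi 0)) (nhds E)) :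
    ∃ S₀ : ℝ, 0 ≤ S₀ ∧ S₀ ≤ E ∧
      (∀ S : ℝ, 0 < S → S < S₀ → V S = max (E - S) 0) ∧
      (∀ S : ℝ, S₀ < S → max (E - S) 0 < V S) := by
  have hVge : ∀ S : ℝ, 0 < S → max (E - S) 0 ≤ V S := by
    intro S hS
    have h := min_le_right (negL r q σ V V' V'' S) (V S - max (E - S) 0)
    rw [hVI S hS] at h; linarith
  set C : Set ℝ := {S : ℝ | 0 < S ∧ S < E ∧ V S = E - S} with hCdef
  set A : Set ℝ := insert 0 C with hAdef
  have hAne : A.Nonempty := ⟨0, Set.mem_insert 0 C⟩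
  have hAbdd : BddAbove A := by
    refine ⟨E, fun x hx => ?_⟩
    rcases hx with h | h
    · rw [h]; exact le_of_lt hE
    · exact le_of_lt h.2.1
  refine ⟨sSup A, ?_, ?_, ?_, ?_⟩
  · exact le_csSup hAbdd (Set.mem_insert 0 C)
  · exact csSup_le hAne (fun x hx => by
      rcases hx with h | h
      · rw [h]; exact le_of_lt hE
      · exact le_of_lt h.2.1)
  · intro S hS hSlt
    obtain ⟨c, hcA, hSc⟩ := exists_lt_of_lt_csSup hAne hSlt
    have hcC : c ∈ C := by
      rcases hcA with h | h
      · exfalso; rw [h] at hSc; linarith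
      · exact h
    have := key_contact r q σ E hr hq hσ V V' V'' hV' hV'' hVI hlim
      c hcC.1 hcC.2.1 hcC.2.2 S hS hSc
    rw [this, max_eq_left]
    linarith [hcC.2.1]
  · intro S hS
    have hS0 : 0 < S := lt_of_le_of_lt (le_csSup hAbdd (Set.mem_insert 0 C)) hS
    have hSnA : S ∉ A := fun h => absurd (le_csSup hAbdd h) (not_le.2 hS)
    have hge := hVge S hS0
    by_cases hSE : S < E
    · have hmax : max (E - S) 0 = E - S := max_eq_left (by linarith)
      rcases lt_or_eq_of_le hge with h | h
      · exact h
      · exfalso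
        apply hSnA
        have hVS : V S = E - S := by rw [hmax] at h; linarith
        exact Set.mem_insert_iff.2 (Or.inr ⟨hS0, hSE, hVS⟩)
    · have hmax : max (E - S) 0 = 0 := max_eq_right (by linarith [not_lt.1 hSE])
      rw [hmax]; exact hpos S hS0
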